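/- Consider a discrete-time switched linear system as in the context, and set c := sqrt( λ_max(Σ_{i ∈ 𝒫} P_i) / min_{i ∈ 𝒫} λ_min(P_i) ), where λ_max and λ_min denote the largest and smallest eigenvalues of a real symmetric matrix. Then for every initial condition x₀ ∈ ℝ^d and every t ∈ ℕ, the solution x (with x(0) = x₀, x(t+1) = A_{σ(t)} x(t)) satisfies ‖x(t)‖ ≤ c ‖x₀‖ · ( (∏_{s=0}^{t−1} λ_{σ(s)}) · (∏_{s < t, σ(s) ≠ σ(s+1)} μ_{σ(s) σ(s+1)}) )^{1/2}, where ‖·‖ is the Euclidean norm on ℝ^d. -/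

import Mathlib

open Filter Matrix

/-- The quadratic Lyapunov-like function `V_P(z) = ⟨P z, z⟩` on `ℝ^d`. -/
noncomputable def lyap {d : ℕ} (P : Matrix (Fin d) (Fin d) ℝ)
    (z : EuclideanSpace ℝ (Fin d)) : ℝ :=
  (inner ℝ (Matrix.toEuclideanLin P z) z : ℝ)

/-- The largest eigenvalue of a real symmetric matrix (junk value `0` otherwise). -/
noncomputable def symmLamMax {d : ℕ} (M : Matrix (Fin d) (Fin d) ℝ) : ℝ :=
  if h : M.IsHermitian then ⨆ i, h.eigenvalues i else 0

/-- The smallest eigenvalue of a real symmetric matrix (junk value `0` otherwise). -/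
noncomputable def symmLamMin {d : ℕ} (M : Matrix (Fin d) (Fin d) ℝ) : ℝ :=
  if h : M.IsHermitian then ⨅ i, h.eigenvalues i else 0

lemma quad_decomp {d : ℕ} {M : Matrix (Fin d) (Fin d) ℝ} (hM : M.IsHermitian) (z : Fin d → ℝ) :
    z ⬝ᵥ (M *ᵥ z) = ∑ i, hM.eigenvalues i *
      ((star (hM.eigenvectorUnitary : Matrix (Fin d) (Fin d) ℝ) *ᵥ z) i)^2 := by
  set U : Matrix (Fin d) (Fin d) ℝ := (hM.eigenvectorUnitary : Matrix (Fin d) (Fin d) ℝ)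
  set y : Fin d → ℝ := star U *ᵥ z with hy
  conv_lhs => rw [hM.spectral_theorem, Unitary.conjStarAlgAut_apply]
  rw [← mulVec_mulVec, ← mulVec_mulVec, dotProduct_mulVec z U, ← mulVec_transpose]
  have hUT : Uᵀ = star U := by
    simp [U, star, conjTranspose]
  rw [hUT, ← hy]
  simp [dotProduct, mulVec_diagonal, Function.comp]
  exact Finset.sum_congr rfl fun i _ => by ring

lemma unit_norm {d : ℕ} {M : Matrix (Fin d) (Fin d) ℝ} (hM : M.IsHermitian) (z : Fin d → ℝ) :
    (star (hM.eigenvectorUnitary : Matrix (Fin d) (Fin d) ℝ) *ᵥ z) ⬝ᵥ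
      (star (hM.eigenvectorUnitary : Matrix (Fin d) (Fin d) ℝ) *ᵥ z) = z ⬝ᵥ z := by
  set U : Matrix (Fin d) (Fin d) ℝ := (hM.eigenvectorUnitary : Matrix (Fin d) (Fin d) ℝ)
  have hUT : Uᵀ = star U := by simp [U, star, conjTranspose]
  have h2 : (star U)ᵀ = U := by rw [← hUT, transpose_transpose]
  rw [dotProduct_mulVec, ← mulVec_transpose, h2, mulVec_mulVec,
    mem_unitaryGroup_iff.mp hM.eigenvectorUnitary.2, one_mulVec]

lemma quad_le_max {d : ℕ} {M : Matrix (Fin d) (Fin d) ℝ} (hM : M.IsHermitian) (z : Fin d → ℝ) :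
    z ⬝ᵥ (M *ᵥ z) ≤ (⨆ i, hM.eigenvalues i) * (z ⬝ᵥ z) := by
  rw [quad_decomp hM z, ← unit_norm hM z]
  set y : Fin d → ℝ := star (hM.eigenvectorUnitary : Matrix (Fin d) (Fin d) ℝ) *ᵥ z
  have : y ⬝ᵥ y = ∑ i, (y i)^2 := by simp [dotProduct, sq]
  rw [this, Finset.mul_sum]
  exact Finset.sum_le_sum fun i _ =>
    mul_le_mul_of_nonneg_right (le_ciSup (Set.Finite.bddAbove (Set.finite_range _)) i)
      (sq_nonneg _)

lemma min_le_quad {d : ℕ} {M : Matrix (Fin d) (Fin d) ℝ} (hM : M.IsHermitian) (z : Fin d → ℝ) :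
    (⨅ i, hM.eigenvalues i) * (z ⬝ᵥ z) ≤ z ⬝ᵥ (M *ᵥ z) := by
  rw [quad_decomp hM z, ← unit_norm hM z]
  set y : Fin d → ℝ := star (hM.eigenvectorUnitary : Matrix (Fin d) (Fin d) ℝ) *ᵥ z
  have : y ⬝ᵥ y = ∑ i, (y i)^2 := by simp [dotProduct, sq]
  rw [this, Finset.mul_sum]
  exact Finset.sum_le_sum fun i _ =>
    mul_le_mul_of_nonneg_right (ciInf_le (Set.Finite.bddBelow (Set.finite_range _)) i)
      (sq_nonneg _)

lemma lyap_eq {d : ℕ} (P : Matrix (Fin d) (Fin d) ℝ) (z : EuclideanSpace ℝ (Fin d)) :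
    lyap P z = (WithLp.equiv 2 _ z) ⬝ᵥ (P *ᵥ WithLp.equiv 2 _ z) := by
  simp [lyap, PiLp.inner_apply, toEuclideanLin_apply, dotProduct, mul_comm]

lemma self_dot {d : ℕ} (z : EuclideanSpace ℝ (Fin d)) :
    (WithLp.equiv 2 _ z) ⬝ᵥ (WithLp.equiv 2 _ z) = ‖z‖^2 := by
  rw [← real_inner_self_eq_norm_sq]
  simp [PiLp.inner_apply, dotProduct, -real_inner_self_eq_norm_sq]
  rw [EuclideanSpace.norm_sq_eq]
  exact Finset.sum_congr rfl fun i _ => by rw [Real.norm_eq_abs, sq_abs, sq]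

lemma lyap_nonneg {d : ℕ} {P : Matrix (Fin d) (Fin d) ℝ} (hP : P.PosSemidef)
    (z : EuclideanSpace ℝ (Fin d)) : 0 ≤ lyap P z := by
  rw [lyap_eq]
  simpa using hP.re_dotProduct_nonneg (WithLp.equiv 2 _ z)

theorem switched_system_norm_bound
    {d : ℕ} {ι : Type*} [Fintype ι] [DecidableEq ι] [Nonempty ι]
    (A Pm : ι → Matrix (Fin d) (Fin d) ℝ)
    (hP : ∀ i, (Pm i).PosDef)
    (lam : ι → ℝ) (hlam : ∀ i, 0 < lam i)
    (hV : ∀ i (ξ : EuclideanSpace ℝ (Fin d)),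
      lyap (Pm i) (Matrix.toEuclideanLin (A i) ξ) ≤ lam i * lyap (Pm i) ξ)
    (mu : ι → ι → ℝ) (hmupos : ∀ i j, 0 < mu i j)
    (hmu : ∀ i j (ξ : EuclideanSpace ℝ (Fin d)),
      lyap (Pm j) ξ ≤ mu i j * lyap (Pm i) ξ)
    (σ : ℕ → ι)
    (x₀ : EuclideanSpace ℝ (Fin d)) (x : ℕ → EuclideanSpace ℝ (Fin d))
    (hx0 : x 0 = x₀)
    (hxrec : ∀ t, x (t + 1) = Matrix.toEuclideanLin (A (σ t)) (x t))
    (t : ℕ) :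
    ‖x t‖ ≤
      Real.sqrt (symmLamMax (∑ i, Pm i) / ⨅ i, symmLamMin (Pm i)) * ‖x₀‖ *
        Real.sqrt ((∏ s ∈ Finset.range t, lam (σ s)) *
          ∏ s ∈ (Finset.range t).filter (fun s => σ s ≠ σ (s + 1)), mu (σ s) (σ (s + 1))) := by
  -- trivial case `d = 0`
  rcases Nat.eq_zero_or_pos d with hd | hd
  · subst hd
    have : x t = 0 := Subsingleton.elim _ _
    rw [this, norm_zero]
    positivity
  have : Nonempty (Fin d) := ⟨⟨0, hd⟩⟩
  -- abbreviations
  set Λ : ℝ := (∏ s ∈ Finset.range t, lam (σ s)) *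
      ∏ s ∈ (Finset.range t).filter (fun s => σ s ≠ σ (s + 1)), mu (σ s) (σ (s + 1)) with hΛ
  have hΛpos : ∀ u : ℕ, 0 < (∏ s ∈ Finset.range u, lam (σ s)) *
      ∏ s ∈ (Finset.range u).filter (fun s => σ s ≠ σ (s + 1)), mu (σ s) (σ (s + 1)) := by
    intro u
    exact mul_pos (Finset.prod_pos fun s _ => hlam _) (Finset.prod_pos fun s _ => hmupos _ _)
  -- the infimum of the minimal eigenvalues is positive
  set m : ℝ := ⨅ i, symmLamMin (Pm i) with hm
  have hmin_pos : ∀ i, 0 < symmLamMin (Pm i) := by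
    intro i
    rw [symmLamMin, dif_pos (hP i).1]
    obtain ⟨j₀, hj₀⟩ := Finite.exists_min ((hP i).1.eigenvalues)
    exact lt_of_lt_of_le ((hP i).eigenvalues_pos j₀) (le_ciInf hj₀)
  have hm_pos : 0 < m := by
    obtain ⟨i₀, hi₀⟩ := Finite.exists_min (fun i => symmLamMin (Pm i))
    exact lt_of_lt_of_le (hmin_pos i₀) (le_ciInf hi₀)
  -- lower bound : m * ‖z‖² ≤ lyap (Pm i) z
  have hlow : ∀ (i : ι) (z : EuclideanSpace ℝ (Fin d)), m * ‖z‖^2 ≤ lyap (Pm i) z := by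
    intro i z
    have h1 : m ≤ symmLamMin (Pm i) := ciInf_le (Set.Finite.bddBelow (Set.finite_range _)) i
    have h2 : symmLamMin (Pm i) * ‖z‖^2 ≤ lyap (Pm i) z := by
      rw [symmLamMin, dif_pos (hP i).1, lyap_eq, ← self_dot z]
      exact min_le_quad (hP i).1 _
    exact le_trans (mul_le_mul_of_nonneg_right h1 (sq_nonneg _)) h2
  -- the sum of the `Pm i` is Hermitian, and positive semidefinite
  have hsumPS : (∑ i, Pm i).PosSemidef := by
    refine Finset.sum_induction Pm _ (fun a b ha hb => ha.add hb) Matrix.PosSemidef.zero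
      (fun i _ => (hP i).posSemidef)
  set Mx : ℝ := symmLamMax (∑ i, Pm i) with hMx
  have hMx_eq : Mx = ⨆ j, hsumPS.1.eigenvalues j := by
    rw [hMx, symmLamMax, dif_pos hsumPS.1]
  have hMx_nonneg : 0 ≤ Mx := by
    rw [hMx_eq]
    exact le_trans (hsumPS.eigenvalues_nonneg (Classical.arbitrary _))
      (le_ciSup (Set.Finite.bddAbove (Set.finite_range _)) _)
  -- upper bound : lyap (Pm j) z ≤ Mx * ‖z‖²
  have hupp : ∀ (j : ι) (z : EuclideanSpace ℝ (Fin d)), lyap (Pm j) z ≤ Mx * ‖z‖^2 := by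
    intro j z
    have h1 : lyap (Pm j) z ≤ lyap (∑ i, Pm i) z := by
      have : lyap (∑ i, Pm i) z = ∑ i, lyap (Pm i) z := by
        simp [lyap, map_sum, LinearMap.sum_apply, sum_inner]
      rw [this]
      exact Finset.single_le_sum (fun i _ => lyap_nonneg (hP i).posSemidef z)
        (Finset.mem_univ j)
    have h2 : lyap (∑ i, Pm i) z ≤ Mx * ‖z‖^2 := by
      rw [hMx_eq, lyap_eq, ← self_dot z]
      exact quad_le_max hsumPS.1 _
    exact h1.trans h2
  -- main induction
  have key : ∀ u : ℕ, lyap (Pm (σ u)) (x u) ≤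
      ((∏ s ∈ Finset.range u, lam (σ s)) *
        ∏ s ∈ (Finset.range u).filter (fun s => σ s ≠ σ (s + 1)), mu (σ s) (σ (s + 1))) *
        lyap (Pm (σ 0)) x₀ := by
    intro u
    induction u with
    | zero => simp [hx0]
    | succ n ih =>
      have hL0 : 0 ≤ lyap (Pm (σ 0)) x₀ := lyap_nonneg (hP _).posSemidef _
      have step1 : lyap (Pm (σ n)) (x (n + 1)) ≤ lam (σ n) * lyap (Pm (σ n)) (x n) := by
        rw [hxrec n]; exact hV (σ n) (x n)
      have step2 : lam (σ n) * lyap (Pm (σ n)) (x n) ≤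
          lam (σ n) * (((∏ s ∈ Finset.range n, lam (σ s)) *
            ∏ s ∈ (Finset.range n).filter (fun s => σ s ≠ σ (s + 1)), mu (σ s) (σ (s + 1))) *
            lyap (Pm (σ 0)) x₀) :=
        mul_le_mul_of_nonneg_left ih (hlam (σ n)).le
      rw [Finset.range_add_one, Finset.prod_insert Finset.notMem_range_self, Finset.filter_insert]
      by_cases hss : σ n = σ (n + 1)
      · rw [if_neg (by simpa using hss)]
        calc lyap (Pm (σ (n + 1))) (x (n + 1))
            = lyap (Pm (σ n)) (x (n + 1)) := by rw [hss]
          _ ≤ _ := step1.trans step2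
          _ = _ := by ring
      · rw [if_pos hss]
        have hnm : n ∉ (Finset.range n).filter (fun s => σ s ≠ σ (s + 1)) :=
          fun h => Finset.notMem_range_self (Finset.mem_filter.mp h).1
        rw [Finset.prod_insert hnm]
        calc lyap (Pm (σ (n + 1))) (x (n + 1))
            ≤ mu (σ n) (σ (n + 1)) * lyap (Pm (σ n)) (x (n + 1)) := hmu _ _ _
          _ ≤ mu (σ n) (σ (n + 1)) * (lam (σ n) * (((∏ s ∈ Finset.range n, lam (σ s)) *
                ∏ s ∈ (Finset.range n).filter (fun s => σ s ≠ σ (s + 1)),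
                  mu (σ s) (σ (s + 1))) * lyap (Pm (σ 0)) x₀)) :=
              mul_le_mul_of_nonneg_left (step1.trans step2) (hmupos _ _).le
          _ = _ := by ring
  -- put everything together
  have chain : m * ‖x t‖^2 ≤ Λ * (Mx * ‖x₀‖^2) :=
    (hlow (σ t) (x t)).trans ((key t).trans
      (mul_le_mul_of_nonneg_left (hupp (σ 0) x₀) (hΛpos t).le))
  have hsq : ‖x t‖^2 ≤ (Mx / m) * ‖x₀‖^2 * Λ := by
    rw [div_mul_eq_mul_div, div_mul_eq_mul_div, le_div_iff₀ hm_pos]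
    nlinarith [chain]
  calc ‖x t‖ = Real.sqrt (‖x t‖^2) := (Real.sqrt_sq (norm_nonneg _)).symm
    _ ≤ Real.sqrt ((Mx / m) * ‖x₀‖^2 * Λ) := Real.sqrt_le_sqrt hsq
    _ = Real.sqrt (Mx / m) * ‖x₀‖ * Real.sqrt Λ := by
        rw [Real.sqrt_mul (by positivity), Real.sqrt_mul (by positivity),
          Real.sqrt_sq (norm_nonneg _)]
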